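/- Let G = (V,E) be a finite simple graph and write Tχ^o_G(q) = ∑_α c^o_α(q) M_α. Then each c^o_α(q) is a palindromic polynomial of degree |E|: for all 0 ≤ k ≤ |E|, the coefficient of q^k in c^o_α(q) equals the coefficient of q^{|E|−k}. Equivalently, for any fixed proper coloring κ, the number of acyclic orientations γ with asc^γ(κ) = k equals the number with asc^γ(κ) = |E| − k. -/

import Mathlib

open scoped Classical

private lemma swap_mem_image {V : Type*} [DecidableEq V] (D : Finset (V × V)) (q : V × V) :
    q ∈ D.image Prod.swap ↔ q.swap ∈ D := by
  constructor
  · rintro h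
    obtain ⟨a, ha, rfl⟩ := Finset.mem_image.mp h
    simpa using ha
  · intro h
    exact Finset.mem_image.mpr ⟨q.swap, h, Prod.swap_swap q⟩

private lemma card_eq_edge {V : Type*} [Fintype V] [DecidableEq V] (G : SimpleGraph V)
    [DecidableRel G.Adj] (D : Finset (V × V))
    (h1 : ∀ q ∈ D, G.Adj q.1 q.2)
    (h2 : ∀ u v, G.Adj u v → ((u, v) ∈ D ↔ (v, u) ∉ D)) :
    D.card = G.edgeFinset.card := by
  apply Finset.card_bij (s := D) (t := G.edgeFinset) (fun q _ => Sym2.mk q.1 q.2)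
  · intro q hq
    simpa [SimpleGraph.mem_edgeFinset] using h1 q hq
  · intro q hq q' hq' heq
    rw [Sym2.mk_eq_mk_iff] at heq
    rcases heq with h | h
    · exact h
    · exfalso
      obtain ⟨u, v⟩ := q
      obtain ⟨u', v'⟩ := q'
      simp only [Prod.swap_prod_mk, Prod.mk.injEq] at h
      obtain ⟨rfl, rfl⟩ := h
      exact (h2 _ _ (h1 _ hq)).mp hq hq'
  · intro e he
    induction e using Sym2.ind with
    | _ u v =>
      rw [SimpleGraph.mem_edgeFinset, SimpleGraph.mem_edgeSet] at he
      by_cases h : (u, v) ∈ D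
      · exact ⟨(u, v), h, rfl⟩
      · refine ⟨(v, u), ?_, Sym2.eq_swap.symm⟩
        exact not_not.mp (fun hn => h ((h2 u v he).mpr hn))

/-- Reversing all edges: properties of the swapped orientation. -/
private lemma swap_props {V : Type*} [Fintype V] [DecidableEq V] (G : SimpleGraph V)
    [DecidableRel G.Adj] (κ : V → ℕ) (hκ : ∀ u v, G.Adj u v → κ u ≠ κ v)
    (D : Finset (V × V))
    (h1 : ∀ q ∈ D, G.Adj q.1 q.2)
    (h2 : ∀ u v, G.Adj u v → ((u, v) ∈ D ↔ (v, u) ∉ D))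
    (h3 : ∀ v, ¬ Relation.TransGen (fun a b => (a, b) ∈ D) v v) :
    (∀ q ∈ D.image Prod.swap, G.Adj q.1 q.2) ∧
    (∀ u v, G.Adj u v → ((u, v) ∈ D.image Prod.swap ↔ (v, u) ∉ D.image Prod.swap)) ∧
    (∀ v, ¬ Relation.TransGen (fun a b => (a, b) ∈ D.image Prod.swap) v v) ∧
    ((D.image Prod.swap).filter fun q => κ q.1 < κ q.2).card =
      G.edgeFinset.card - (D.filter fun q => κ q.1 < κ q.2).card := by
  refine ⟨?_, ?_, ?_, ?_⟩
  · intro q hq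
    rw [swap_mem_image] at hq
    exact (h1 _ hq).symm
  · intro u v huv
    rw [swap_mem_image, swap_mem_image]
    simpa using (h2 v u huv.symm)
  · intro v hv
    apply h3 v
    have hv' : Relation.TransGen (Function.swap fun a b => (a, b) ∈ D) v v :=
      Relation.TransGen.mono (fun a b h => (swap_mem_image D (a, b)).mp h) _ _ hv
    exact (Relation.transGen_swap).mp hv'
  · have himg : ((D.image Prod.swap).filter fun q => κ q.1 < κ q.2) =
        (D.filter fun q => κ q.2 < κ q.1).image Prod.swap := by
      ext q
      rw [Finset.mem_filter, swap_mem_image, Finset.mem_image]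
      constructor
      · rintro ⟨hq, hlt⟩
        exact ⟨q.swap, Finset.mem_filter.mpr ⟨hq, hlt⟩, Prod.swap_swap q⟩
      · rintro ⟨a, ha, rfl⟩
        rw [Finset.mem_filter] at ha
        exact ⟨by simpa using ha.1, ha.2⟩
    rw [himg, Finset.card_image_of_injective _ Prod.swap_injective]
    have hne : (D.filter fun q => κ q.2 < κ q.1) =
        (D.filter fun q => ¬ κ q.1 < κ q.2) := by
      apply Finset.filter_congr
      intro q hq
      have := hκ _ _ (h1 q hq)
      omega
    rw [hne, ← card_eq_edge G D h1 h2]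
    have := Finset.card_filter_add_card_filter_not
      (s := D) (p := fun q => κ q.1 < κ q.2)
    omega

open scoped Classical in
theorem stmt15 {V : Type*} [Fintype V] [DecidableEq V] (G : SimpleGraph V)
    [DecidableRel G.Adj] (κ : V → ℕ) (hκ : ∀ u v, G.Adj u v → κ u ≠ κ v)
    (k : ℕ) (hk : k ≤ G.edgeFinset.card) :
    (Finset.univ.filter fun D : Finset (V × V) =>
        (∀ q ∈ D, G.Adj q.1 q.2) ∧
        (∀ u v, G.Adj u v → ((u, v) ∈ D ↔ (v, u) ∉ D)) ∧
        (∀ v, ¬ Relation.TransGen (fun a b => (a, b) ∈ D) v v) ∧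
        (D.filter fun q => κ q.1 < κ q.2).card = k).card =
      (Finset.univ.filter fun D : Finset (V × V) =>
        (∀ q ∈ D, G.Adj q.1 q.2) ∧
        (∀ u v, G.Adj u v → ((u, v) ∈ D ↔ (v, u) ∉ D)) ∧
        (∀ v, ¬ Relation.TransGen (fun a b => (a, b) ∈ D) v v) ∧
        (D.filter fun q => κ q.1 < κ q.2).card = G.edgeFinset.card - k).card := by
  apply Finset.card_bij' (fun D _ => D.image Prod.swap) (fun D _ => D.image Prod.swap)
  · intro D _
    rw [Finset.image_image]
    simp [Function.comp_def]
  · intro D _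
    rw [Finset.image_image]
    simp [Function.comp_def]
  · intro D hD
    rw [Finset.mem_filter] at hD ⊢
    obtain ⟨-, h1, h2, h3, h4⟩ := hD
    obtain ⟨g1, g2, g3, g4⟩ := swap_props G κ hκ D h1 h2 h3
    exact ⟨Finset.mem_univ _, g1, g2, g3, by rw [g4, h4]⟩
  · intro D hD
    rw [Finset.mem_filter] at hD ⊢
    obtain ⟨-, h1, h2, h3, h4⟩ := hD
    obtain ⟨g1, g2, g3, g4⟩ := swap_props G κ hκ D h1 h2 h3
    refine ⟨Finset.mem_univ _, g1, g2, g3, ?_⟩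
    rw [g4, h4, Nat.sub_sub_self hk]
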